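/- Let F be an entire function, k ≥ 2, L > 1, b > 0, and suppose max{|F(z)| : |z| = L^{k^n}} ≤ L^{b k^n} for all sufficiently large n. Then F is a polynomial of degree at most b + 1. -/

import Mathlib

open Filter Polynomial Topology

/-- If an entire function `F` satisfies `|F| ≤ L^{b k^n}` on the circle of radius
`L^{k^n}` for all sufficiently large `n`, then `F` is a polynomial of degree at most
`b + 1`. -/
theorem entire_growth_polynomial
    (F : ℂ → ℂ) (hF : Differentiable ℂ F)
    (k : ℕ) (hk : 2 ≤ k) (L b : ℝ) (hL : 1 < L) (hb : 0 < b)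
    (hbound : ∃ N₀ : ℕ, ∀ n : ℕ, N₀ ≤ n → ∀ z : ℂ,
      ‖z‖ = L ^ ((k : ℝ) ^ n) → ‖F z‖ ≤ L ^ (b * (k : ℝ) ^ n)) :
    ∃ P : Polynomial ℂ, (P.natDegree : ℝ) ≤ b + 1 ∧ ∀ z : ℂ, F z = P.eval z := by
  obtain ⟨N₀, hN₀⟩ := hbound
  have hL0 : (0:ℝ) < L := lt_trans one_pos hL
  have hRpos : ∀ n : ℕ, (0:ℝ) < L ^ ((k:ℝ)^n) := fun n => Real.rpow_pos_of_pos hL0 _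
  -- the (fixed) power series of F at 0, obtained from radius `L ^ k ^ n`
  have hp : ∀ n : ℕ, HasFPowerSeriesOnBall F (cauchyPowerSeries F 0 (L ^ ((k:ℝ)^n))) 0 (⊤ : ENNReal) := by
    intro n
    have h := hF.hasFPowerSeriesOnBall 0 (R := (L ^ ((k:ℝ)^n)).toNNReal)
      (by simpa [Real.toNNReal_pos] using hRpos n)
    rwa [Real.coe_toNNReal _ (hRpos n).le] at h
  set p := cauchyPowerSeries F 0 (L ^ ((k:ℝ)^(N₀))) with hpdef
  have hpn : ∀ n : ℕ, cauchyPowerSeries F 0 (L ^ ((k:ℝ)^n)) = p := fun n =>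
    (hp n).hasFPowerSeriesAt.eq_formalMultilinearSeries (hp N₀).hasFPowerSeriesAt
  -- coefficient bound
  have hcoeff : ∀ m n : ℕ, N₀ ≤ n → ‖p m‖ ≤ L ^ ((b - m) * (k:ℝ)^n) := by
    intro m n hn
    set x : ℝ := (k:ℝ)^n with hx
    set R : ℝ := L ^ x with hR
    have hRp : 0 < R := hRpos n
    have hInt : (∫ θ : ℝ in (0:ℝ)..2 * Real.pi, ‖F (circleMap 0 R θ)‖)
        ≤ L ^ (b * x) * (2 * Real.pi) := by
      have hb1 : ∀ θ : ℝ, ‖F (circleMap 0 R θ)‖ ≤ L ^ (b * x) := by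
        intro θ
        refine hN₀ n hn _ ?_
        simpa [norm_circleMap_zero, abs_of_pos hRp]
      calc (∫ θ : ℝ in (0:ℝ)..2 * Real.pi, ‖F (circleMap 0 R θ)‖)
          ≤ ‖∫ θ : ℝ in (0:ℝ)..2 * Real.pi, ‖F (circleMap 0 R θ)‖‖ := le_abs_self _
        _ ≤ L ^ (b * x) * |2 * Real.pi - 0| :=
            intervalIntegral.norm_integral_le_of_norm_le_const (fun θ _ => by
              simpa using hb1 θ)
        _ = L ^ (b * x) * (2 * Real.pi) := by
            rw [sub_zero, abs_of_pos Real.two_pi_pos]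
    have h1 := norm_cauchyPowerSeries_le F 0 R m
    rw [hpn n] at h1
    refine h1.trans ?_
    have h2 : ((2 * Real.pi)⁻¹ * ∫ θ : ℝ in (0:ℝ)..2 * Real.pi, ‖F (circleMap 0 R θ)‖)
        ≤ L ^ (b * x) := by
      rw [inv_mul_le_iff₀ Real.two_pi_pos]
      linarith [hInt]
    have h3 : |R|⁻¹ ^ m = L ^ (-(m:ℝ) * x) := by
      rw [abs_of_pos hRp, hR, ← Real.rpow_neg hL0.le, ← Real.rpow_natCast (L ^ (-x)) m,
        ← Real.rpow_mul hL0.le]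
      ring_nf
    calc ((2 * Real.pi)⁻¹ * ∫ θ : ℝ in (0:ℝ)..2 * Real.pi, ‖F (circleMap 0 R θ)‖) * |R|⁻¹ ^ m
        ≤ L ^ (b * x) * L ^ (-(m:ℝ) * x) := by
          rw [h3]
          exact mul_le_mul_of_nonneg_right h2 (Real.rpow_nonneg hL0.le _)
      _ = L ^ ((b - m) * x) := by
          rw [← Real.rpow_add hL0]; ring_nf
  -- coefficients of index ≥ ⌊b⌋ + 1 vanish
  set M : ℕ := Nat.floor b + 1 with hM
  have hbM : b < M := by exact_mod_cast Nat.lt_floor_add_one b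
  have hzero : ∀ m : ℕ, M ≤ m → p m = 0 := by
    intro m hm
    have hlim : Tendsto (fun n : ℕ => L ^ ((b - m) * (k:ℝ)^n)) atTop (𝓝 0) := by
      have h1 : Tendsto (fun n : ℕ => (k:ℝ)^n) atTop atTop :=
        tendsto_pow_atTop_atTop_of_one_lt (by exact_mod_cast hk.trans_lt' one_lt_two)
      have hneg : b - m < 0 := by
        have : (M:ℝ) ≤ m := by exact_mod_cast hm
        linarith
      have h2 : Tendsto (fun n : ℕ => (b - m) * (k:ℝ)^n) atTop atBot := by
        exact Tendsto.const_mul_atTop_of_neg hneg h1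
      exact (tendsto_rpow_atBot_of_base_gt_one L hL).comp h2
    have hle : ‖p m‖ ≤ 0 := by
      refine ge_of_tendsto hlim ?_
      filter_upwards [eventually_ge_atTop N₀] with n hn
      exact hcoeff m n hn
    simpa using norm_le_zero_iff.mp hle
  -- the polynomial
  refine ⟨∑ i ∈ Finset.range M, Polynomial.C (p i fun _ => (1:ℂ)) * Polynomial.X ^ i, ?_, ?_⟩
  · have hdeg : (∑ i ∈ Finset.range M,
        Polynomial.C (p i fun _ => (1:ℂ)) * Polynomial.X ^ i).natDegree ≤ Nat.floor b := by
      refine Polynomial.natDegree_sum_le_of_forall_le _ _ ?_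
      intro i hi
      refine (Polynomial.natDegree_C_mul_X_pow_le _ _).trans ?_
      have := Finset.mem_range.mp hi
      omega
    calc ((∑ i ∈ Finset.range M,
          Polynomial.C (p i fun _ => (1:ℂ)) * Polynomial.X ^ i).natDegree : ℝ)
        ≤ (Nat.floor b : ℝ) := by exact_mod_cast hdeg
      _ ≤ b := Nat.floor_le hb.le
      _ ≤ b + 1 := by linarith
  · intro z
    have hsum := (hp N₀).hasSum (y := z) (by simp)
    rw [zero_add] at hsum
    rw [hpn N₀] at hsum
    have hterm : ∀ i : ℕ, (p i fun _ => z) = z ^ i * (p i fun _ => (1:ℂ)) := by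
      intro i
      have : (fun _ : Fin i => z) = fun _ : Fin i => z • (1:ℂ) := by simp
      rw [this, (p i).map_smul_univ]
      simp [smul_eq_mul]
    have hsum2 : HasSum (fun i : ℕ => p i fun _ => z)
        (∑ i ∈ Finset.range M, (p i fun _ => z)) := by
      refine hasSum_sum_of_ne_finset_zero ?_
      intro i hi
      rw [hzero i (by simpa using hi)]
      simp
    have := hsum.unique hsum2
    rw [this]
    simp only [hterm, Polynomial.eval_finset_sum, Polynomial.eval_mul, Polynomial.eval_C,
      Polynomial.eval_pow, Polynomial.eval_X]
    exact Finset.sum_congr rfl fun i _ => mul_comm _ _
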